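/- arXiv:1906.03644 — 4 statements merged into one kernel-verified Lean document; each statement's English description precedes it below -/
import Mathlib

section
/- For a probability density α(x) and a positive integrable function f(x) with normalization constant C = ∫ f(x) dx, the squared total variation distance ‖α − f‖_TV² = (½ ∫ |α(x) − f(x)| dx)² is at most ((2C + 1)/6) · (KL̂(α‖f) + C − 1), where KL̂(α‖f) = ∫ α(x) log(α(x)/f(x)) dx. -/
open MeasureTheory Real

private lemma g_mono : MonotoneOn (fun r : ℝ => (r + 1) * Real.log r - 2 * (r - 1)) (Set.Ioi 0) := by
  have hlog : ContinuousOn Real.log (Set.Ioi 0) :=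
    Real.continuousOn_log.mono (fun x hx => Set.mem_compl_singleton_iff.mpr (ne_of_gt hx))
  apply monotoneOn_of_hasDerivWithinAt_nonneg (convex_Ioi 0)
    (f' := fun r => Real.log r + (r + 1) * r⁻¹ - 2)
  · exact ((continuousOn_id.add continuousOn_const).mul hlog).sub
      (continuousOn_const.mul (continuousOn_id.sub continuousOn_const))
  · intro r hr
    rw [interior_Ioi] at hr
    have hd : HasDerivAt (fun r : ℝ => (r + 1) * Real.log r - 2 * (r - 1))
        (Real.log r + (r + 1) * r⁻¹ - 2) r := by
      have h1 := (((hasDerivAt_id r).add_const 1).mul (Real.hasDerivAt_log (ne_of_gt hr))).sub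
        (((hasDerivAt_id r).sub_const 1).const_mul 2)
      exact h1.congr_deriv (by simp only [id_eq]; ring)
    exact hd.hasDerivWithinAt.mono (by rw [interior_Ioi])
  · intro r hr
    rw [interior_Ioi] at hr
    have h1 : 1 - r⁻¹ ≤ Real.log r := Real.one_sub_inv_le_log_of_pos hr
    have hr0 : r ≠ 0 := ne_of_gt hr
    have h2 : (r + 1) * r⁻¹ = 1 + r⁻¹ := by field_simp
    linarith

private lemma key_ineq {r : ℝ} (hr : 0 < r) :
    3 * (r - 1) ^ 2 ≤ 2 * (r + 2) * (r * Real.log r - r + 1) := by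
  set h : ℝ → ℝ := fun s => 2 * (s + 2) * (s * Real.log s - s + 1) - 3 * (s - 1) ^ 2 with hh
  have hlog : ContinuousOn Real.log (Set.Ioi 0) :=
    Real.continuousOn_log.mono (fun x hx => Set.mem_compl_singleton_iff.mpr (ne_of_gt hx))
  have hcont : ContinuousOn h (Set.Ioi 0) := by
    apply ContinuousOn.sub
    · exact (continuousOn_const.mul (continuousOn_id.add continuousOn_const)).mul
        (((continuousOn_id.mul hlog).sub continuousOn_id).add continuousOn_const)
    · exact continuousOn_const.mul ((continuousOn_id.sub continuousOn_const).pow 2)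
  have hderiv : ∀ s : ℝ, 0 < s → HasDerivAt h
      (4 * ((s + 1) * Real.log s - 2 * (s - 1))) s := by
    intro s hs
    have hinner : HasDerivAt (fun s : ℝ => s * Real.log s - s + 1) (Real.log s + 1 - 1) s :=
      ((Real.hasDerivAt_mul_log (ne_of_gt hs)).sub (hasDerivAt_id s)).add_const 1
    have houter : HasDerivAt (fun s : ℝ => 2 * (s + 2)) 2 s := by
      simpa using ((hasDerivAt_id s).add_const 2).const_mul 2
    have hsq : HasDerivAt (fun s : ℝ => 3 * (s - 1) ^ 2) (3 * (2 * (s - 1) ^ 1 * 1)) s :=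
      (((hasDerivAt_id s).sub_const 1).pow 2).const_mul 3
    have := ((houter.mul hinner).sub hsq)
    exact this.congr_deriv (by ring)
  have hg1 : ((1 : ℝ) + 1) * Real.log 1 - 2 * ((1 : ℝ) - 1) = 0 := by simp
  have h1 : h 1 = 0 := by simp [hh]
  have key : h 1 ≤ h r := by
    rcases le_total r 1 with hr1 | hr1
    · have hanti : AntitoneOn h (Set.Ioc 0 1) := by
        apply antitoneOn_of_hasDerivWithinAt_nonpos (convex_Ioc 0 1)
          (f' := fun s => 4 * ((s + 1) * Real.log s - 2 * (s - 1)))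
          (hcont.mono Set.Ioc_subset_Ioi_self)
        · intro s hs
          rw [interior_Ioc] at hs
          exact (hderiv s hs.1).hasDerivWithinAt
        · intro s hs
          rw [interior_Ioc] at hs
          have := g_mono (Set.mem_Ioi.mpr hs.1) (Set.mem_Ioi.mpr one_pos) hs.2.le
          norm_num [Real.log_one] at this
          nlinarith [this]
      exact hanti (Set.mem_Ioc.mpr ⟨hr, hr1⟩) (Set.mem_Ioc.mpr ⟨one_pos, le_refl 1⟩) hr1
    · have hmono : MonotoneOn h (Set.Ici 1) := by
        apply monotoneOn_of_hasDerivWithinAt_nonneg (convex_Ici 1)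
          (f' := fun s => 4 * ((s + 1) * Real.log s - 2 * (s - 1)))
          (hcont.mono (fun x hx => Set.mem_Ioi.mpr (lt_of_lt_of_le one_pos hx)))
        · intro s hs
          rw [interior_Ici] at hs
          exact (hderiv s (lt_trans one_pos hs)).hasDerivWithinAt
        · intro s hs
          rw [interior_Ici] at hs
          have := g_mono (Set.mem_Ioi.mpr one_pos) (Set.mem_Ioi.mpr (lt_trans one_pos hs)) hs.le
          norm_num [Real.log_one] at this
          nlinarith [this]
      exact hmono (Set.mem_Ici.mpr (le_refl 1)) (Set.mem_Ici.mpr hr1) hr1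
  rw [h1] at key
  simp only [hh] at key
  linarith

private lemma ptwise {a b : ℝ} (ha : 0 ≤ a) (hb : 0 < b) :
    (a - b) ^ 2 / (a + 2 * b) ≤ 2 / 3 * (a * Real.log (a / b) - a + b) := by
  rcases eq_or_lt_of_le ha with h0 | ha'
  · rw [← h0]
    have e : ((0 : ℝ) - b) ^ 2 / (0 + 2 * b) = b / 2 := by
      field_simp
      ring
    rw [e]
    simp only [zero_mul, zero_sub, neg_zero, zero_add]
    linarith
  · have hr : 0 < a / b := div_pos ha' hb
    have key := key_ineq hr
    have hb' : b ≠ 0 := hb.ne'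
    rw [div_le_iff₀ (by positivity : (0 : ℝ) < a + 2 * b)]
    have e := mul_le_mul_of_nonneg_left key (by positivity : (0 : ℝ) ≤ b ^ 2 / 3)
    have e1 : b ^ 2 / 3 * (3 * (a / b - 1) ^ 2) = (a - b) ^ 2 := by
      field_simp
    have e2 : b ^ 2 / 3 * (2 * (a / b + 2) * (a / b * Real.log (a / b) - a / b + 1))
        = 2 / 3 * (a * Real.log (a / b) - a + b) * (a + 2 * b) := by
      field_simp
    linarith

/-- Generalized Pinsker inequality for an unnormalized second argument:
for a probability density `α` and a positive integrable function `f` with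
normalization constant `C = ∫ f`, the squared TV distance
`(½ ∫ |α − f|)²` is bounded by `((2C+1)/6)(KL̂(α‖f) + C − 1)`,
where `KL̂(α‖f) = ∫ α log(α/f)`. -/
theorem generalized_pinsker {D : ℕ} (α f : (Fin D → ℝ) → ℝ) (C : ℝ)
    (hα_nonneg : ∀ x, 0 ≤ α x) (hα_int : Integrable α)
    (hα_norm : ∫ x, α x = 1)
    (hf_pos : ∀ x, 0 < f x) (hf_int : Integrable f)
    (hC : C = ∫ x, f x)
    (hKL_int : Integrable (fun x => α x * Real.log (α x / f x))) :
    ((1 / 2) * ∫ x, |α x - f x|) ^ 2 ≤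
      ((2 * C + 1) / 6) * ((∫ x, α x * Real.log (α x / f x)) + C - 1) := by
  set u : (Fin D → ℝ) → ℝ := fun x => (α x - f x) ^ 2 / (α x + 2 * f x) with hu_def
  set v : (Fin D → ℝ) → ℝ := fun x => α x + 2 * f x with hv_def
  have hv_pos : ∀ x, 0 < v x := fun x => by
    have h1 := hα_nonneg x; have h2 := hf_pos x
    simp only [hv_def]; linarith
  have hu_nonneg : ∀ x, 0 ≤ u x := fun x => div_nonneg (sq_nonneg _) (hv_pos x).le
  have hbound : ∀ x, u x ≤ 2 / 3 * (α x * Real.log (α x / f x) - α x + f x) :=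
    fun x => ptwise (hα_nonneg x) (hf_pos x)
  have hw_int : Integrable (fun x => α x * Real.log (α x / f x) - α x + f x) :=
    (hKL_int.sub hα_int).add hf_int
  have hu_meas : AEStronglyMeasurable u volume := by
    have hA := hα_int.aemeasurable
    have hF := hf_int.aemeasurable
    exact (((hA.sub hF).pow_const 2).div (hA.add (hF.const_mul 2))).aestronglyMeasurable
  have hu_int : Integrable u := by
    apply Integrable.mono' (hw_int.const_mul (2 / 3)) hu_meas
    filter_upwards with x
    rw [Real.norm_of_nonneg (hu_nonneg x)]
    exact hbound x
  have hv_int : Integrable v := hα_int.add (hf_int.const_mul 2)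
  have hmu : MemLp (fun x => Real.sqrt (u x)) (ENNReal.ofReal 2) volume := by
    rw [show ENNReal.ofReal 2 = 2 by norm_num]
    refine (memLp_two_iff_integrable_sq ?_).2 ?_
    · exact Real.continuous_sqrt.comp_aestronglyMeasurable hu_meas
    · apply hu_int.congr
      filter_upwards with x
      rw [Real.sq_sqrt (hu_nonneg x)]
  have hmv : MemLp (fun x => Real.sqrt (v x)) (ENNReal.ofReal 2) volume := by
    rw [show ENNReal.ofReal 2 = 2 by norm_num]
    refine (memLp_two_iff_integrable_sq ?_).2 ?_
    · exact Real.continuous_sqrt.comp_aestronglyMeasurable hv_int.aestronglyMeasurable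
    · apply hv_int.congr
      filter_upwards with x
      rw [Real.sq_sqrt (hv_pos x).le]
  have hpq : Real.HolderConjugate 2 2 := Real.HolderConjugate.two_two
  have holder := integral_mul_le_Lp_mul_Lq_of_nonneg hpq
    (ae_of_all _ fun x => Real.sqrt_nonneg (u x))
    (ae_of_all _ fun x => Real.sqrt_nonneg (v x)) hmu hmv
  have eU : ∫ x, Real.sqrt (u x) ^ (2 : ℝ) = ∫ x, u x := by
    refine integral_congr_ae (ae_of_all _ fun x => ?_)
    show Real.sqrt (u x) ^ (2 : ℝ) = u x
    rw [show ((2 : ℝ)) = ((2 : ℕ) : ℝ) by norm_num, Real.rpow_natCast,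
      Real.sq_sqrt (hu_nonneg x)]
  have eV : ∫ x, Real.sqrt (v x) ^ (2 : ℝ) = ∫ x, v x := by
    refine integral_congr_ae (ae_of_all _ fun x => ?_)
    show Real.sqrt (v x) ^ (2 : ℝ) = v x
    rw [show ((2 : ℝ)) = ((2 : ℕ) : ℝ) by norm_num, Real.rpow_natCast,
      Real.sq_sqrt (hv_pos x).le]
  have eT : ∫ x, Real.sqrt (u x) * Real.sqrt (v x) = ∫ x, |α x - f x| := by
    refine integral_congr_ae (ae_of_all _ fun x => ?_)
    show Real.sqrt (u x) * Real.sqrt (v x) = |α x - f x|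
    rw [← Real.sqrt_mul (hu_nonneg x)]
    have : u x * v x = (α x - f x) ^ 2 := by
      simp only [hu_def, hv_def]
      exact div_mul_cancel₀ _ (hv_pos x).ne'
    rw [this, Real.sqrt_sq_eq_abs]
  rw [eU, eV, eT] at holder
  set T : ℝ := ∫ x, |α x - f x| with hT_def
  set A : ℝ := ∫ x, u x with hA_def
  set B : ℝ := ∫ x, v x with hB_def
  set KL : ℝ := ∫ x, α x * Real.log (α x / f x) with hKL_def
  have hT0 : 0 ≤ T := integral_nonneg fun x => abs_nonneg _
  have hA0 : 0 ≤ A := integral_nonneg fun x => hu_nonneg x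
  have hB0 : 0 ≤ B := integral_nonneg fun x => (hv_pos x).le
  have hC0 : 0 ≤ C := hC ▸ integral_nonneg fun x => (hf_pos x).le
  have hIu : A ≤ 2 / 3 * (KL + C - 1) := by
    have h1 : A ≤ ∫ x, 2 / 3 * (α x * Real.log (α x / f x) - α x + f x) :=
      integral_mono hu_int (hw_int.const_mul (2 / 3)) fun x => hbound x
    have h2 : ∫ x, 2 / 3 * (α x * Real.log (α x / f x) - α x + f x)
        = 2 / 3 * (KL + C - 1) := by
      have hsub : Integrable (fun x => α x * Real.log (α x / f x) - α x) :=
        hKL_int.sub hα_int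
      rw [integral_const_mul (2 / 3 : ℝ), integral_add hsub hf_int,
        integral_sub hKL_int hα_int, hα_norm, ← hC, ← hKL_def]
      ring
    linarith
  have hIv : B = 1 + 2 * C := by
    simp only [hB_def, hv_def]
    rw [integral_add hα_int (hf_int.const_mul 2), integral_const_mul (2 : ℝ), hα_norm, ← hC]
  have hsq : T ^ 2 ≤ A * B := by
    calc T ^ 2 ≤ (A ^ ((1 : ℝ) / 2) * B ^ ((1 : ℝ) / 2)) ^ 2 :=
          pow_le_pow_left₀ hT0 holder 2
      _ = A * B := by
          rw [mul_pow, ← Real.rpow_natCast (A ^ ((1 : ℝ) / 2)) 2,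
            ← Real.rpow_natCast (B ^ ((1 : ℝ) / 2)) 2,
            ← Real.rpow_mul hA0, ← Real.rpow_mul hB0]
          norm_num
  have hAB : A * B ≤ 2 / 3 * (KL + C - 1) * (1 + 2 * C) := by
    rw [hIv]
    exact mul_le_mul_of_nonneg_right hIu (by linarith)
  calc ((1 / 2) * T) ^ 2 = T ^ 2 / 4 := by ring
    _ ≤ A * B / 4 := by linarith
    _ ≤ 2 / 3 * (KL + C - 1) * (1 + 2 * C) / 4 := by linarith
    _ = (2 * C + 1) / 6 * (KL + C - 1) := by ring
end

section
/- For all real r ≥ −1, (1 + r) log(1 + r) − r ≥ (1/2) · r² / (1 + r/3). -/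
noncomputable def pinskerAux : ℝ → ℝ :=
  fun x => Real.log x - (x - 1) * (5 * x + 1) / (2 * x * (x + 2))

lemma pinskerAux_hasDerivAt (y : ℝ) (hy : 0 < y) :
    HasDerivAt pinskerAux ((y - 1) ^ 3 / (y ^ 2 * (y + 2) ^ 2)) y := by
  have hden : 2 * y * (y + 2) ≠ 0 := by positivity
  have h1 : HasDerivAt Real.log y⁻¹ y := Real.hasDerivAt_log (ne_of_gt hy)
  have hu : HasDerivAt (fun x : ℝ => (x - 1) * (5 * x + 1)) (10 * y - 4) y := by
    have := ((hasDerivAt_id y).sub_const 1).mul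
      (((hasDerivAt_id y).const_mul 5).add_const 1)
    refine this.congr_deriv ?_; simp [id]; ring
  have hv : HasDerivAt (fun x : ℝ => 2 * x * (x + 2)) (4 * y + 4) y := by
    have := (((hasDerivAt_id y).const_mul 2)).mul ((hasDerivAt_id y).add_const 2)
    refine this.congr_deriv ?_; simp [id]; ring
  have hq := hu.div hv hden
  have h := h1.sub hq
  refine h.congr_deriv ?_
  field_simp
  ring

lemma pinskerAux_one : pinskerAux 1 = 0 := by
  simp [pinskerAux]

lemma log_ge_rat (x : ℝ) (hx : 0 < x) :
    (x - 1) * (5 * x + 1) / (2 * x * (x + 2)) ≤ Real.log x := by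
  rw [← sub_nonneg]
  have key : 0 ≤ pinskerAux x := by
    rcases le_total 1 x with h | h
    · have hmono : MonotoneOn pinskerAux (Set.Icc 1 x) := by
        apply monotoneOn_of_deriv_nonneg (convex_Icc 1 x)
        · intro y hy
          exact (pinskerAux_hasDerivAt y (lt_of_lt_of_le one_pos hy.1)).continuousAt.continuousWithinAt
        · intro y hy
          rw [interior_Icc] at hy
          exact (pinskerAux_hasDerivAt y (lt_trans one_pos hy.1)).differentiableAt.differentiableWithinAt
        · intro y hy
          rw [interior_Icc] at hy
          rw [(pinskerAux_hasDerivAt y (lt_trans one_pos hy.1)).deriv]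
          have h1 : (0:ℝ) ≤ (y - 1) ^ 3 := pow_nonneg (by linarith [hy.1]) 3
          positivity
      have := hmono (Set.left_mem_Icc.mpr h) (Set.right_mem_Icc.mpr h) h
      rwa [pinskerAux_one] at this
    · have hanti : AntitoneOn pinskerAux (Set.Icc x 1) := by
        apply antitoneOn_of_deriv_nonpos (convex_Icc x 1)
        · intro y hy
          exact (pinskerAux_hasDerivAt y (lt_of_lt_of_le hx hy.1)).continuousAt.continuousWithinAt
        · intro y hy
          rw [interior_Icc] at hy
          exact (pinskerAux_hasDerivAt y (lt_trans hx hy.1)).differentiableAt.differentiableWithinAt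
        · intro y hy
          rw [interior_Icc] at hy
          rw [(pinskerAux_hasDerivAt y (lt_trans hx hy.1)).deriv]
          apply div_nonpos_of_nonpos_of_nonneg
          · have : y - 1 ≤ 0 := by linarith [hy.2]
            exact Odd.pow_nonpos ⟨1, by ring⟩ this
          · positivity
      have := hanti (Set.left_mem_Icc.mpr h) (Set.right_mem_Icc.mpr h) h
      rwa [pinskerAux_one] at this
  simpa [pinskerAux] using key

/-- For all real `r ≥ -1`, `(1+r) log(1+r) − r ≥ ½ r² / (1 + r/3)`
(at `r = -1` the left side is `0` since `Real.log 0 = 0`). -/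
theorem pointwise_pinsker_ineq (r : ℝ) (hr : -1 ≤ r) :
    (1 + r) * Real.log (1 + r) - r ≥ (1 / 2) * r ^ 2 / (1 + r / 3) := by
  rcases eq_or_lt_of_le hr with h | h
  · subst_eqs
    norm_num
  · have hx : 0 < 1 + r := by linarith
    have key := log_ge_rat (1 + r) hx
    have h2 : (1 + r) * ((1 + r - 1) * (5 * (1 + r) + 1) / (2 * (1 + r) * (1 + r + 2)))
        ≤ (1 + r) * Real.log (1 + r) := by
      exact mul_le_mul_of_nonneg_left key hx.le
    have h3 : 0 < 1 + r / 3 := by linarith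
    rw [ge_iff_le, div_le_iff₀ h3]
    have hne : (1 + r) ≠ 0 := ne_of_gt hx
    have hne2 : (1 + r + 2) ≠ 0 := by positivity
    have hne3 : (r + 3) ≠ 0 := by linarith
    have heq : (1 + r) * ((1 + r - 1) * (5 * (1 + r) + 1) / (2 * (1 + r) * (1 + r + 2)))
        = r * (5 * r + 6) / (2 * (r + 3)) := by
      field_simp
      ring
    rw [heq] at h2
    have h4 : (0:ℝ) < 2 * (r + 3) := by linarith
    have h5 := (div_le_iff₀ h4).mp h2
    nlinarith [h5]
end

section
/- The function d*(x,y) satisfying d*(x,y)/d*(y,x) = q(y|x)p(x)/(q(x|y)p(y)) is a stationary point of the objective L(d) = E_{x∼p, y∼q(·|x)}[ log(d(y,x)/d(x,y)) + d(y,x)/d(x,y) ], and at this point L(d*) = 1 − KL(q(y|x)p(x) ‖ q(x|y)p(y)). -/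
open MeasureTheory
open scoped ENNReal

private lemma aux_integrable_of_integral_eq_one {α : Type*} [MeasurableSpace α] {μ : Measure α}
    {f : α → ℝ} (h : ∫ x, f x ∂μ = 1) : Integrable f μ := by
  by_contra hc
  rw [integral_undef hc] at h
  norm_num at h

private lemma log_div_ne_zero {a b : ℝ} (ha : 0 < a) (hb : 0 < b) (hne : a ≠ b) :
    Real.log (a / b) ≠ 0 := by
  intro h
  rcases Real.log_eq_zero.mp h with h1 | h1 | h1
  · exact absurd h1 (div_ne_zero ha.ne' hb.ne')
  · exact hne ((div_eq_one_iff_eq hb.ne').mp h1)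
  · nlinarith [div_pos ha hb]

private lemma key_ineq_s9 {a b r : ℝ} (ha : 0 < a) (hb : 0 < b) (hr : 0 < r) :
    a + b + a * Real.log (b / a) + b * Real.log (a / b) ≤
      a * (Real.log r + r) + b * (Real.log r⁻¹ + r⁻¹) := by
  set u : ℝ := r * a / b with hu
  have hu_pos : 0 < u := div_pos (mul_pos hr ha) hb
  have hlogr : Real.log r = Real.log u + Real.log (b / a) := by
    rw [hu, Real.log_div (mul_pos hr ha).ne' hb.ne', Real.log_mul hr.ne' ha.ne',
      Real.log_div hb.ne' ha.ne']
    ring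
  have h1 : Real.log u ≤ u - 1 := Real.log_le_sub_one_of_pos hu_pos
  have h2 : 1 - u⁻¹ ≤ Real.log u := by
    have := Real.log_le_sub_one_of_pos (inv_pos.mpr hu_pos)
    rw [Real.log_inv] at this
    linarith
  have hru : a * r = b * u := by
    rw [hu, mul_comm b, div_mul_cancel₀ _ hb.ne']
    ring
  have hrinv : b * r⁻¹ = a * u⁻¹ := by
    rw [hu]
    field_simp
  have hlogab : Real.log (a / b) = - Real.log (b / a) := by
    rw [Real.log_div ha.ne' hb.ne', Real.log_div hb.ne' ha.ne']; ring
  rw [Real.log_inv, hlogr, hlogab]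
  have key : a + b ≤ (a - b) * Real.log u + b * u + a * u⁻¹ := by
    have huu : u * u⁻¹ = 1 := mul_inv_cancel₀ hu_pos.ne'
    rcases le_total a b with hab | hab
    · have h3 : (a - b) * Real.log u ≥ (a - b) * (u - 1) := by
        apply mul_le_mul_of_nonpos_left h1 (by linarith)
      have h4 : a * u⁻¹ * u = a := by rw [mul_assoc, mul_comm u⁻¹ u, huu]; ring
      nlinarith [sq_nonneg (u - 1), mul_pos ha hu_pos]
    · have h3 : (a - b) * Real.log u ≥ (a - b) * (1 - u⁻¹) := by
        apply mul_le_mul_of_nonneg_left h2 (by linarith)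
      have h4 : a * u⁻¹ * u = a := by rw [mul_assoc, mul_comm u⁻¹ u, huu]; ring
      nlinarith [sq_nonneg (u - 1), mul_pos hb hu_pos]
  nlinarith [key]

set_option maxHeartbeats 1000000 in
/-- The discriminator `d*` whose ratio matches the joint density ratio,
`d*(x,y)/d*(y,x) = q(y|x)p(x)/(q(x|y)p(y))`, is a stationary (in fact
minimizing) point of the objective
`L(d) = E_{x∼p, y∼q(·|x)}[log(d(y,x)/d(x,y)) + d(y,x)/d(x,y)]`, and its value
there is `1 − KL(q(y|x)p(x) ‖ q(x|y)p(y))`. -/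
theorem optimal_discriminator_value {D : ℕ}
    (q : (Fin D → ℝ) → (Fin D → ℝ) → ℝ) (p : (Fin D → ℝ) → ℝ)
    (dstar : (Fin D → ℝ) → (Fin D → ℝ) → ℝ)
    (hq_pos : ∀ x y, 0 < q x y) (hq_kernel : ∀ y, ∫ x, q x y = 1)
    (hp_pos : ∀ x, 0 < p x) (hp_norm : ∫ x, p x = 1)
    (hdstar_pos : ∀ x y, 0 < dstar x y)
    (hratio : ∀ x y, dstar x y / dstar y x = q y x * p x / (q x y * p y))
    (hKL_int : Integrable (fun z : ((Fin D → ℝ) × (Fin D → ℝ)) =>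
      p z.1 * q z.2 z.1 * Real.log (q z.2 z.1 * p z.1 / (q z.1 z.2 * p z.2)))) :
    (∀ d : (Fin D → ℝ) → (Fin D → ℝ) → ℝ, (∀ x y, 0 < d x y) →
      Integrable (fun z : ((Fin D → ℝ) × (Fin D → ℝ)) =>
        p z.1 * q z.2 z.1 * (Real.log (d z.2 z.1 / d z.1 z.2) + d z.2 z.1 / d z.1 z.2)) →
      (∫ x, ∫ y, p x * q y x *
          (Real.log (dstar y x / dstar x y) + dstar y x / dstar x y)) ≤
        ∫ x, ∫ y, p x * q y x * (Real.log (d y x / d x y) + d y x / d x y)) ∧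
    (∫ x, ∫ y, p x * q y x *
        (Real.log (dstar y x / dstar x y) + dstar y x / dstar x y)) =
      1 - ∫ x, ∫ y, p x * q y x * Real.log (q y x * p x / (q x y * p y)) := by
  classical
  set μ : Measure (Fin D → ℝ) := volume with hμ
  have hp_int : Integrable p μ := aux_integrable_of_integral_eq_one hp_norm
  have hq_int : ∀ y, Integrable (fun x => q x y) μ := fun y =>
    aux_integrable_of_integral_eq_one (hq_kernel y)
  set A : (Fin D → ℝ) × (Fin D → ℝ) → ℝ := fun z => p z.1 * q z.2 z.1 with hA
  set B : (Fin D → ℝ) × (Fin D → ℝ) → ℝ := fun z => q z.1 z.2 * p z.2 with hB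
  have hApos : ∀ z, 0 < A z := fun z => mul_pos (hp_pos _) (hq_pos _ _)
  have hBpos : ∀ z, 0 < B z := fun z => mul_pos (hq_pos _ _) (hp_pos _)
  set F : (Fin D → ℝ) × (Fin D → ℝ) → ℝ := fun z =>
    p z.1 * q z.2 z.1 * Real.log (q z.2 z.1 * p z.1 / (q z.1 z.2 * p z.2)) with hFdef
  have hF_eq : ∀ z, F z = A z * Real.log (A z / B z) := by
    intro z
    simp only [hFdef, hA, hB]
    rw [mul_comm (q z.2 z.1) (p z.1)]
  have hF_int : Integrable F (μ.prod μ) := hKL_int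
  set G : (Fin D → ℝ) × (Fin D → ℝ) → ℝ := fun z => F z.swap with hGdef
  have hG_int : Integrable G (μ.prod μ) := hF_int.swap
  have hG_eq : ∀ z, G z = B z * Real.log (B z / A z) := by
    intro z
    simp only [hGdef, hFdef, hA, hB, Prod.fst_swap, Prod.snd_swap]
    rw [mul_comm (q z.1 z.2) (p z.2), mul_comm (p z.1) (q z.2 z.1)]
  have hAswap : ∀ z : (Fin D → ℝ) × (Fin D → ℝ), A z.swap = B z := fun z =>
    mul_comm (p z.2) (q z.1 z.2)
  have hBswap : ∀ z : (Fin D → ℝ) × (Fin D → ℝ), B z.swap = A z := fun z =>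
    mul_comm (q z.2 z.1) (p z.1)
  -- the three key facts about `B`
  obtain ⟨hBy_int, hβ_int, hβ_integral⟩ :
      (∀ᵐ x ∂μ, Integrable (fun y => B (x, y)) μ) ∧
      Integrable (fun x => ∫ y, B (x, y) ∂μ) μ ∧
      (∫ x, ∫ y, B (x, y) ∂μ ∂μ) = 1 := by
    -- measurable representatives of F and G
    have hFm : AEMeasurable F (μ.prod μ) := hF_int.aemeasurable
    set F' : (Fin D → ℝ) × (Fin D → ℝ) → ℝ := hFm.mk F with hF'def
    have hF'meas : Measurable F' := hFm.measurable_mk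
    have hFF' : F =ᵐ[μ.prod μ] F' := hFm.ae_eq_mk
    set G' : (Fin D → ℝ) × (Fin D → ℝ) → ℝ := fun z => F' z.swap with hG'def
    have hG'meas : Measurable G' := hF'meas.comp measurable_swap
    have hswap_map : (μ.prod μ).map Prod.swap = μ.prod μ := Measure.measurePreserving_swap.map_eq
    have hGG' : G =ᵐ[μ.prod μ] G' := by
      have h1 : (F ∘ Prod.swap) =ᵐ[μ.prod μ] (F' ∘ Prod.swap) :=
        ae_eq_comp measurable_swap.aemeasurable (by rw [hswap_map]; exact hFF')
      exact h1
    -- the function B1 = B restricted to the set where A ≠ B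
    set B1 : (Fin D → ℝ) × (Fin D → ℝ) → ℝ := fun z =>
      if F z + G z = 0 then 0 else -G z / Real.log (-(F z / G z)) with hB1def
    have hlogBA : ∀ z : (Fin D → ℝ) × (Fin D → ℝ),
        Real.log (B z / A z) = - Real.log (A z / B z) := by
      intro z
      rw [Real.log_div (hBpos z).ne' (hApos z).ne', Real.log_div (hApos z).ne' (hBpos z).ne']
      ring
    have hZ_iff : ∀ z, F z + G z = 0 ↔ A z = B z := by
      intro z
      rw [hF_eq, hG_eq, hlogBA]
      constructor
      · intro h
        by_contra hne
        have hL : Real.log (A z / B z) ≠ 0 := log_div_ne_zero (hApos z) (hBpos z) hne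
        have h2 : (A z - B z) * Real.log (A z / B z) = 0 := by ring_nf; ring_nf at h; linarith
        rcases mul_eq_zero.mp h2 with h3 | h3
        · exact hne (by linarith)
        · exact hL h3
      · intro h
        rw [h]
        ring
    have hB1_eq : ∀ z, B1 z = if A z = B z then 0 else B z := by
      intro z
      by_cases hz : A z = B z
      · rw [hB1def]
        simp only
        rw [if_pos ((hZ_iff z).mpr hz), if_pos hz]
      · have hL : Real.log (A z / B z) ≠ 0 := log_div_ne_zero (hApos z) (hBpos z) hz
        have hGz : G z = -(B z * Real.log (A z / B z)) := by
          rw [hG_eq, hlogBA]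
          ring
        have hFz := hF_eq z
        have hzne : F z + G z ≠ 0 := fun h => hz ((hZ_iff z).mp h)
        rw [hB1def]
        simp only
        rw [if_neg hzne, if_neg hz]
        have hratio2 : -(F z / G z) = A z / B z := by
          rw [hFz, hGz, div_neg, neg_neg, mul_div_mul_right _ _ hL]
        rw [hratio2, hGz, neg_neg, mul_div_assoc, div_self hL, mul_one]
    have hB1m : AEMeasurable B1 (μ.prod μ) := by
      have hmeas : Measurable (fun z => if F' z + G' z = 0 then 0
          else -G' z / Real.log (-(F' z / G' z))) := by
        apply Measurable.ite
        · exact measurableSet_eq_fun (hF'meas.add hG'meas) measurable_const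
        · exact measurable_const
        · exact (hG'meas.neg).div (Real.measurable_log.comp ((hF'meas.div hG'meas).neg))
      refine ⟨_, hmeas, ?_⟩
      filter_upwards [hFF', hGG'] with z h1 h2
      rw [hB1def]
      simp only [h1, h2]
    -- the symmetric part H
    set H : (Fin D → ℝ) × (Fin D → ℝ) → ℝ := fun z => if A z = B z then B z else 0 with hHdef
    have hB_split : ∀ z, B z = B1 z + H z := by
      intro z
      rw [hB1_eq, hHdef]
      simp only
      by_cases hz : A z = B z
      · rw [if_pos hz, if_pos hz]
        ring
      · rw [if_neg hz, if_neg hz]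
        ring
    have hH_symm : ∀ z : (Fin D → ℝ) × (Fin D → ℝ), H z.swap = H z := by
      intro z
      rw [hHdef]
      simp only [hAswap, hBswap]
      by_cases hz : A z = B z
      · rw [if_pos hz.symm, if_pos hz, hz]
      · rw [if_neg (Ne.symm hz), if_neg hz]
    have hB1_nonneg : ∀ z, 0 ≤ B1 z := by
      intro z
      rw [hB1_eq]
      split
      · exact le_refl 0
      · exact (hBpos z).le
    have hH_nonneg : ∀ z, 0 ≤ H z := by
      intro z
      rw [hHdef]
      simp only
      split
      · exact (hBpos z).le
      · exact le_refl 0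
    have hB1_le : ∀ z, B1 z ≤ B z := by
      intro z
      rw [hB1_eq]
      split
      · exact (hBpos z).le
      · exact le_refl _
    -- ENNReal versions
    set Bn : (Fin D → ℝ) × (Fin D → ℝ) → ℝ≥0∞ := fun z => ENNReal.ofReal (B z) with hBndef
    set B1n : (Fin D → ℝ) × (Fin D → ℝ) → ℝ≥0∞ := fun z => ENNReal.ofReal (B1 z) with hB1ndef
    set Hn : (Fin D → ℝ) × (Fin D → ℝ) → ℝ≥0∞ := fun z => ENNReal.ofReal (H z) with hHndef
    have hBn_split : ∀ z, Bn z = B1n z + Hn z := by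
      intro z
      rw [hBndef, hB1ndef, hHndef]
      simp only
      rw [hB_split z, ENNReal.ofReal_add (hB1_nonneg z) (hH_nonneg z)]
    have hB1n_m : AEMeasurable B1n (μ.prod μ) :=
      ENNReal.measurable_ofReal.comp_aemeasurable hB1m
    have hB1n_le : ∀ z, B1n z ≤ Bn z := by
      intro z
      rw [hBndef, hB1ndef]
      exact ENNReal.ofReal_le_ofReal (hB1_le z)
    have hHn_symm : ∀ x y, Hn (x, y) = Hn (y, x) := by
      intro x y
      rw [hHndef]
      simp only
      rw [show H (y, x) = H (x, y) from hH_symm (x, y)]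
    have hHn_eq_sub : ∀ z, Hn z = Bn z - B1n z := by
      intro z
      rw [hBn_split z]
      exact (ENNReal.add_sub_cancel_left ENNReal.ofReal_ne_top).symm
    -- x-direction slice integrals
    have hBx_int : ∀ y, Integrable (fun x => B (x, y)) μ := fun y => (hq_int y).mul_const (p y)
    have hBx_lint : ∀ y, (∫⁻ x, Bn (x, y) ∂μ) = ENNReal.ofReal (p y) := by
      intro y
      rw [hBndef]
      simp only
      rw [← ofReal_integral_eq_lintegral_ofReal (hBx_int y)
        (Filter.Eventually.of_forall fun x => (hBpos (x, y)).le)]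
      congr 1
      have : (∫ x, B (x, y) ∂μ) = ∫ x, q x y * p y ∂μ := rfl
      rw [this, integral_mul_const, hq_kernel y, one_mul]
    have hp_lint : (∫⁻ x, ENNReal.ofReal (p x) ∂μ) = 1 := by
      rw [← ofReal_integral_eq_lintegral_ofReal hp_int
        (Filter.Eventually.of_forall fun x => (hp_pos x).le), hp_norm, ENNReal.ofReal_one]
    -- measurable representative of B1n
    set B1n' : (Fin D → ℝ) × (Fin D → ℝ) → ℝ≥0∞ := hB1n_m.mk B1n with hB1n'def
    have hB1n'meas : Measurable B1n' := hB1n_m.measurable_mk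
    have hB1nE : B1n =ᵐ[μ.prod μ] B1n' := hB1n_m.ae_eq_mk
    have hT2 : (∫⁻ z, B1n z ∂(μ.prod μ)) = ∫⁻ y, ∫⁻ x, B1n' (x, y) ∂μ ∂μ := by
      rw [lintegral_congr_ae hB1nE]
      exact lintegral_prod_symm _ hB1n'meas.aemeasurable
    have hT1 : (∫⁻ z, B1n z ∂(μ.prod μ)) = ∫⁻ x, ∫⁻ y, B1n' (x, y) ∂μ ∂μ := by
      rw [lintegral_congr_ae hB1nE]
      exact lintegral_prod _ hB1n'meas.aemeasurable
    -- x-direction slices of B1n agree a.e. with those of B1n'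
    have hslicex : ∀ᵐ y ∂μ, (fun x => B1n (x, y)) =ᵐ[μ] fun x => B1n' (x, y) := by
      have h1 : (B1n ∘ Prod.swap) =ᵐ[μ.prod μ] (B1n' ∘ Prod.swap) :=
        ae_eq_comp measurable_swap.aemeasurable (by rw [hswap_map]; exact hB1nE)
      exact Measure.ae_ae_of_ae_prod h1
    set ψ : (Fin D → ℝ) → ℝ≥0∞ := fun y => ∫⁻ x, B1n (x, y) ∂μ with hψdef
    have hψE : ψ =ᵐ[μ] fun y => ∫⁻ x, B1n' (x, y) ∂μ := by
      filter_upwards [hslicex] with y hy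
      rw [hψdef]
      exact lintegral_congr_ae hy
    have hψm : AEMeasurable ψ μ := ⟨_, hB1n'meas.lintegral_prod_left', hψE⟩
    have hψ_le : ∀ y, ψ y ≤ ENNReal.ofReal (p y) := by
      intro y
      rw [hψdef]
      calc (∫⁻ x, B1n (x, y) ∂μ) ≤ ∫⁻ x, Bn (x, y) ∂μ :=
            lintegral_mono fun x => hB1n_le (x, y)
        _ = ENNReal.ofReal (p y) := hBx_lint y
    have hψ_lint : (∫⁻ y, ψ y ∂μ) = ∫⁻ z, B1n z ∂(μ.prod μ) := by
      rw [hT2]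
      exact lintegral_congr_ae hψE
    have hT_le : (∫⁻ z, B1n z ∂(μ.prod μ)) ≤ 1 := by
      rw [← hψ_lint, ← hp_lint]
      exact lintegral_mono hψ_le
    have hT_ne_top : (∫⁻ z, B1n z ∂(μ.prod μ)) ≠ ⊤ :=
      (lt_of_le_of_lt hT_le ENNReal.one_lt_top).ne
    -- x-direction slice integrals of Hn
    have hφx : ∀ᵐ y ∂μ, (∫⁻ x, Hn (x, y) ∂μ) = ENNReal.ofReal (p y) - ψ y := by
      filter_upwards [hslicex] with y hy
      have hmx : AEMeasurable (fun x => B1n (x, y)) μ :=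
        ⟨fun x => B1n' (x, y), hB1n'meas.comp measurable_prodMk_right, hy⟩
      have hadd : ENNReal.ofReal (p y) = ψ y + ∫⁻ x, Hn (x, y) ∂μ := by
        rw [← hBx_lint y, hψdef]
        rw [← lintegral_add_left' hmx]
        exact lintegral_congr fun x => hBn_split (x, y)
      have hfin : ψ y ≠ ⊤ :=
        (lt_of_le_of_lt (hψ_le y) ENNReal.ofReal_lt_top).ne
      exact ENNReal.eq_sub_of_add_eq hfin (by rw [add_comm]; exact hadd.symm)
    -- y-direction slice measurability of B
    have hFy_slice : ∀ᵐ x ∂μ, (fun y => F (x, y)) =ᵐ[μ] fun y => F' (x, y) :=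
      Measure.ae_ae_of_ae_prod hFF'
    have hB1n_slice : ∀ᵐ x ∂μ, (fun y => B1n (x, y)) =ᵐ[μ] fun y => B1n' (x, y) :=
      Measure.ae_ae_of_ae_prod hB1nE
    have hB_formula : ∀ z, B z = A z * Real.exp (-(F z / A z)) := by
      intro z
      rw [hF_eq]
      have h1 : A z * Real.log (A z / B z) / A z = Real.log (A z / B z) := by
        rw [mul_comm, mul_div_assoc, div_self (hApos z).ne', mul_one]
      rw [h1, Real.exp_neg, Real.exp_log (div_pos (hApos z) (hBpos z)), inv_div,
        mul_comm, div_mul_cancel₀ _ (hApos z).ne']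
    have hBy_meas : ∀ᵐ x ∂μ, AEMeasurable (fun y => B (x, y)) μ := by
      filter_upwards [hFy_slice] with x hx
      have hFxm : AEMeasurable (fun y => F (x, y)) μ :=
        ⟨fun y => F' (x, y), hF'meas.comp measurable_prodMk_left, hx⟩
      have hAxm : AEMeasurable (fun y => A (x, y)) μ :=
        (hq_int x).aemeasurable.const_mul (p x)
      have h2 : (fun y => B (x, y)) = fun y => A (x, y) * Real.exp (-(F (x, y) / A (x, y))) :=
        funext fun y => hB_formula (x, y)
      rw [h2]
      exact hAxm.mul (Real.measurable_exp.comp_aemeasurable ((hFxm.div hAxm).neg))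
    -- the function x ↦ ∫⁻ y, Bn (x, y)
    set βl : (Fin D → ℝ) → ℝ≥0∞ := fun x => ∫⁻ y, Bn (x, y) ∂μ with hβldef
    have hβl_ae : βl =ᵐ[μ] fun x =>
        (∫⁻ y, B1n' (x, y) ∂μ) + (ENNReal.ofReal (p x) - ψ x) := by
      filter_upwards [hB1n_slice, hφx] with x h1 h2
      rw [hβldef]
      simp only
      have e1 : (∫⁻ y, Bn (x, y) ∂μ) = (∫⁻ y, B1n (x, y) ∂μ) + ∫⁻ y, Hn (x, y) ∂μ := by
        rw [← lintegral_add_left'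
          (⟨fun y => B1n' (x, y), hB1n'meas.comp measurable_prodMk_left, h1⟩ :
            AEMeasurable (fun y => B1n (x, y)) μ)]
        exact lintegral_congr fun y => hBn_split (x, y)
      rw [e1, lintegral_congr_ae h1]
      congr 1
      calc (∫⁻ y, Hn (x, y) ∂μ) = ∫⁻ y, Hn (y, x) ∂μ :=
            lintegral_congr fun y => hHn_symm x y
        _ = ENNReal.ofReal (p x) - ψ x := h2
    have hβlm : AEMeasurable βl μ := by
      have h1 : AEMeasurable (fun x => ∫⁻ y, B1n' (x, y) ∂μ) μ :=
        hB1n'meas.lintegral_prod_right'.aemeasurable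
      have h2 : AEMeasurable (fun x => ENNReal.ofReal (p x)) μ :=
        ENNReal.measurable_ofReal.comp_aemeasurable hp_int.aemeasurable
      exact ((h1.add (h2.sub hψm)).congr hβl_ae.symm)
    have hβl_lint : (∫⁻ x, βl x ∂μ) = 1 := by
      rw [lintegral_congr_ae hβl_ae]
      have h1 : AEMeasurable (fun x => ∫⁻ y, B1n' (x, y) ∂μ) μ :=
        hB1n'meas.lintegral_prod_right'.aemeasurable
      rw [lintegral_add_left' h1]
      have e2 : (∫⁻ x, ∫⁻ y, B1n' (x, y) ∂μ ∂μ) = ∫⁻ z, B1n z ∂(μ.prod μ) := hT1.symm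
      have e3 : (∫⁻ x, (ENNReal.ofReal (p x) - ψ x) ∂μ)
          = 1 - ∫⁻ z, B1n z ∂(μ.prod μ) := by
        rw [lintegral_sub' hψm (by rw [hψ_lint]; exact hT_ne_top)
          (Filter.Eventually.of_forall hψ_le), hp_lint, hψ_lint]
      rw [e2, e3]
      exact add_tsub_cancel_of_le hT_le
    have hβl_fin : ∀ᵐ x ∂μ, βl x < ⊤ :=
      ae_lt_top' hβlm (by rw [hβl_lint]; exact ENNReal.one_ne_top)
    have hBy_int : ∀ᵐ x ∂μ, Integrable (fun y => B (x, y)) μ := by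
      filter_upwards [hBy_meas, hβl_fin] with x h1 h2
      refine ⟨h1.aestronglyMeasurable, ?_⟩
      rw [hasFiniteIntegral_iff_ofReal
        (Filter.Eventually.of_forall fun y => (hBpos (x, y)).le)]
      simp only [hβldef, hBndef] at h2
      exact h2
    have hβnn : ∀ x, 0 ≤ ∫ y, B (x, y) ∂μ :=
      fun x => integral_nonneg fun y => (hBpos (x, y)).le
    have hβ_ae : (fun x => ∫ y, B (x, y) ∂μ) =ᵐ[μ] fun x => (βl x).toReal := by
      filter_upwards [hBy_meas] with x h1
      rw [integral_eq_lintegral_of_nonneg_ae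
        (Filter.Eventually.of_forall fun y => (hBpos (x, y)).le) h1.aestronglyMeasurable]
    have hofReal_ae : (fun x => ENNReal.ofReal (∫ y, B (x, y) ∂μ)) =ᵐ[μ] βl := by
      filter_upwards [hβ_ae, hβl_fin] with x h1 h2
      rw [h1, ENNReal.ofReal_toReal h2.ne]
    have hβ_int : Integrable (fun x => ∫ y, B (x, y) ∂μ) μ := by
      refine ⟨((ENNReal.measurable_toReal.comp_aemeasurable hβlm).congr
        hβ_ae.symm).aestronglyMeasurable, ?_⟩
      rw [hasFiniteIntegral_iff_ofReal (Filter.Eventually.of_forall hβnn)]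
      rw [lintegral_congr_ae hofReal_ae, hβl_lint]
      exact ENNReal.one_lt_top
    have hβ_integral : (∫ x, ∫ y, B (x, y) ∂μ ∂μ) = 1 := by
      rw [integral_eq_lintegral_of_nonneg_ae (Filter.Eventually.of_forall hβnn)
        hβ_int.aestronglyMeasurable]
      rw [lintegral_congr_ae hofReal_ae, hβl_lint]
      simp
    exact ⟨hBy_int, hβ_int, hβ_integral⟩
  -- equality part
  have hFy_int : ∀ᵐ x ∂μ, Integrable (fun y => F (x, y)) μ := hF_int.prod_right_ae
  have key_eq : (∫ x, ∫ y, (B (x, y) - F (x, y)) ∂μ ∂μ) = 1 - ∫ z, F z ∂(μ.prod μ) := by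
    have h1 : ∀ᵐ x ∂μ, (∫ y, (B (x, y) - F (x, y)) ∂μ)
        = (∫ y, B (x, y) ∂μ) - ∫ y, F (x, y) ∂μ := by
      filter_upwards [hFy_int, hBy_int] with x h2 h3
      exact integral_sub h3 h2
    rw [integral_congr_ae h1, integral_sub hβ_int hF_int.integral_prod_left,
      hβ_integral, integral_prod _ hF_int]
  -- rewriting the `dstar` objective
  have hdstar_eq : ∀ x y, p x * q y x *
      (Real.log (dstar y x / dstar x y) + dstar y x / dstar x y)
      = B (x, y) - F (x, y) := by
    intro x y
    have h1 : dstar y x / dstar x y = B (x, y) / A (x, y) := by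
      rw [← inv_div (dstar x y) (dstar y x), hratio x y, inv_div]
      simp only [hA, hB]
      rw [mul_comm (q y x) (p x)]
    rw [h1, hF_eq]
    have hAxy : A (x, y) = p x * q y x := rfl
    have hlog : Real.log (B (x, y) / A (x, y)) = - Real.log (A (x, y) / B (x, y)) := by
      rw [Real.log_div (hBpos _).ne' (hApos _).ne', Real.log_div (hApos _).ne' (hBpos _).ne']
      ring
    rw [← hAxy, hlog]
    rw [mul_add, mul_comm (A (x, y)) (B (x, y) / A (x, y)),
      div_mul_cancel₀ _ (hApos (x, y)).ne']
    ring
  have hdstar_L : (∫ x, ∫ y, p x * q y x *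
      (Real.log (dstar y x / dstar x y) + dstar y x / dstar x y) ∂μ ∂μ)
      = 1 - ∫ z, F z ∂(μ.prod μ) := by
    rw [← key_eq]
    exact integral_congr_ae (Filter.Eventually.of_forall fun x =>
      integral_congr_ae (Filter.Eventually.of_forall fun y => hdstar_eq x y))
  constructor
  · -- inequality part
    intro d hd_pos hd_int
    set fd : (Fin D → ℝ) × (Fin D → ℝ) → ℝ := fun z =>
      p z.1 * q z.2 z.1 * (Real.log (d z.2 z.1 / d z.1 z.2) + d z.2 z.1 / d z.1 z.2) with hfd
    have hfd_int : Integrable fd (μ.prod μ) := hd_int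
    have hfds_int : Integrable (fun z => fd z.swap) (μ.prod μ) := hfd_int.swap
    have hU_ge : ∀ z : (Fin D → ℝ) × (Fin D → ℝ),
        A z + B z ≤ fd z + fd z.swap + F z + G z := by
      intro z
      have hr : 0 < d z.2 z.1 / d z.1 z.2 := div_pos (hd_pos _ _) (hd_pos _ _)
      have h1 : fd z = A z * (Real.log (d z.2 z.1 / d z.1 z.2) + d z.2 z.1 / d z.1 z.2) := rfl
      have h2 : fd z.swap
          = B z * (Real.log (d z.2 z.1 / d z.1 z.2)⁻¹ + (d z.2 z.1 / d z.1 z.2)⁻¹) := by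
        have h2a : fd z.swap
            = A z.swap * (Real.log (d z.1 z.2 / d z.2 z.1) + d z.1 z.2 / d z.2 z.1) := rfl
        rw [h2a, hAswap, ← inv_div (d z.2 z.1) (d z.1 z.2)]
      have h3 := key_ineq_s9 (hApos z) (hBpos z) hr
      have hl2 : Real.log (A z / B z) = - Real.log (B z / A z) := by
        rw [Real.log_div (hApos _).ne' (hBpos _).ne', Real.log_div (hBpos _).ne' (hApos _).ne']
        ring
      rw [h1, h2, hF_eq, hG_eq, hl2]
      rw [hl2] at h3
      nlinarith [h3]
    have hU_int : Integrable (fun z => fd z + fd z.swap + F z + G z) (μ.prod μ) :=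
      ((hfd_int.add hfds_int).add hF_int).add hG_int
    have hsum : (∫ z, (fd z + fd z.swap + F z + G z) ∂(μ.prod μ))
        = 2 * (∫ z, fd z ∂(μ.prod μ)) + 2 * (∫ z, F z ∂(μ.prod μ)) := by
      have i1 : Integrable (fun z => fd z + fd z.swap) (μ.prod μ) := hfd_int.add hfds_int
      have i2 : Integrable (fun z => fd z + fd z.swap + F z) (μ.prod μ) := i1.add hF_int
      rw [integral_add i2 hG_int, integral_add i1 hF_int, integral_add hfd_int hfds_int]
      simp only [hGdef]
      rw [integral_prod_swap fd, integral_prod_swap F]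
      ring
    have hslice : ∀ᵐ x ∂μ, p x + (∫ y, B (x, y) ∂μ)
        ≤ ∫ y, (fd (x, y) + fd (x, y).swap + F (x, y) + G (x, y)) ∂μ := by
      filter_upwards [hU_int.prod_right_ae, hBy_int] with x hU hBx
      have hA_int : Integrable (fun y => A (x, y)) μ := (hq_int x).const_mul (p x)
      have h1 : (∫ y, (A (x, y) + B (x, y)) ∂μ) = p x + ∫ y, B (x, y) ∂μ := by
        rw [integral_add hA_int hBx]
        congr 1
        calc ∫ y, A (x, y) ∂μ = ∫ y, p x * q y x ∂μ := rfl
          _ = p x * ∫ y, q y x ∂μ := integral_const_mul _ _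
          _ = p x := by rw [hq_kernel x, mul_one]
      rw [← h1]
      exact integral_mono_ae (hA_int.add hBx) hU
        (Filter.Eventually.of_forall fun y => hU_ge (x, y))
    have houter : (∫ x, (p x + ∫ y, B (x, y) ∂μ) ∂μ)
        ≤ ∫ x, ∫ y, (fd (x, y) + fd (x, y).swap + F (x, y) + G (x, y)) ∂μ ∂μ :=
      integral_mono_ae (hp_int.add hβ_int) hU_int.integral_prod_left hslice
    have hlhs2 : (∫ x, (p x + ∫ y, B (x, y) ∂μ) ∂μ) = 2 := by
      rw [integral_add hp_int hβ_int, hp_norm, hβ_integral]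
      norm_num
    have hfinal : (2 : ℝ)
        ≤ 2 * (∫ z, fd z ∂(μ.prod μ)) + 2 * (∫ z, F z ∂(μ.prod μ)) := by
      calc (2 : ℝ) = ∫ x, (p x + ∫ y, B (x, y) ∂μ) ∂μ := hlhs2.symm
        _ ≤ ∫ x, ∫ y, (fd (x, y) + fd (x, y).swap + F (x, y) + G (x, y)) ∂μ ∂μ := houter
        _ = ∫ z, (fd z + fd z.swap + F z + G z) ∂(μ.prod μ) :=
          (integral_prod _ hU_int).symm
        _ = _ := hsum
    have hiter : (∫ x, ∫ y, p x * q y x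
        * (Real.log (d y x / d x y) + d y x / d x y) ∂μ ∂μ)
        = ∫ x, ∫ y, fd (x, y) ∂μ ∂μ := by
      simp only [hfd]
    rw [hdstar_L, hiter, ← integral_prod _ hfd_int]
    linarith [hfinal]
  · -- equality part
    rw [hdstar_L, integral_prod _ hF_int]
end

section
/- For fixed positive reals a = p(x)q(y|x) and c = p(y)q(x|y), the function of the ratio r = d(x,y)/d(y,x) given by a(log(1/r) + 1/r) + c(log r + r) is minimized over r > 0 at r = a/c. -/
/-- Pointwise minimization of the discriminator objective: for fixed `a, c > 0`,
the function `r ↦ a (log(1/r) + 1/r) + c (log r + r)` on `(0, ∞)` is minimized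
at `r = a/c`. -/
theorem pointwise_objective_minimizer (a c : ℝ) (ha : 0 < a) (hc : 0 < c) :
    ∀ r : ℝ, 0 < r →
      a * (Real.log (1 / (a / c)) + 1 / (a / c)) + c * (Real.log (a / c) + a / c) ≤
        a * (Real.log (1 / r) + 1 / r) + c * (Real.log r + r) := by
  intro r hr
  have hm : 0 < a / c := div_pos ha hc
  have h1 : Real.log (r / (a / c)) ≤ r / (a / c) - 1 :=
    Real.log_le_sub_one_of_pos (div_pos hr hm)
  have h2 : Real.log ((a / c) / r) ≤ (a / c) / r - 1 :=
    Real.log_le_sub_one_of_pos (div_pos hm hr)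
  rw [Real.log_div (ne_of_gt hr) (ne_of_gt hm)] at h1
  rw [Real.log_div (ne_of_gt hm) (ne_of_gt hr)] at h2
  rw [Real.log_div one_ne_zero (ne_of_gt hr), Real.log_div one_ne_zero (ne_of_gt hm),
    Real.log_one]
  have e1 : r / (a / c) = r * c / a := by field_simp
  have e2 : (a / c) / r = a / (c * r) := by field_simp
  have e3 : 1 / (a / c) = c / a := by field_simp
  rw [e1] at h1
  rw [e2] at h2
  rw [e3]
  have hca : a * (r * c / a) = r * c := by field_simp
  have hcr : c * (a / (c * r)) = a / r := by field_simp
  have k1 : a * (c / a) = c := by field_simp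
  have k2 : c * (a / c) = a := by field_simp
  have k3 : a * (1 / r) = a / r := by ring
  nlinarith [k1, k2, k3, mul_le_mul_of_nonneg_left h1 ha.le, mul_le_mul_of_nonneg_left h2 hc.le,
    hca, hcr, mul_pos hc hr, div_pos ha hr,
    mul_div_cancel₀ a (ne_of_gt hc)]
end
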